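/- Let C be a linear [n,k]_q code with generator matrix G ∈ F_q^{k×n} of rank k, and let a, b ∈ F_q^k. Suppose ψ = (M_ψ, β) is a semimonomial transformation of F_q^{n+1} with M_ψ = [[M1, 0],[0, μ]], M1 ∈ Mon_n(F_q), μ ∈ F_q^*, mapping the code generated by (G | a^T) onto the code generated by (G | b^T). Then (μ^{-1} M1, β) ∈ Aut(C), and, writing A' ∈ GL(k, F_q) for the matrix with (G μ^{-1} M1)^β = A' G, one has a^T = (A' b^T)^{β^{-1}}; i.e., a^T and b^T lie in the same orbit under the action of Im(f) on F_q^k given by (A, γ)(x) = (A x^T)^{γ^{-1}}, where f(M, α) = (A_φ, α) is determined by (G M)^α = A_φ G for (M, α) ∈ Aut(C). -/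

import Mathlib

open Matrix

variable {F : Type*} [Field F]

/-- A monomial matrix: a product `D * P` of an invertible diagonal matrix and a
permutation matrix. -/
def IsMonomial {n : Type*} [Fintype n] [DecidableEq n] (M : Matrix n n F) : Prop :=
  ∃ (d : n → Fˣ) (P : Equiv.Perm n),
    M = Matrix.diagonal (fun i => (d i : F)) * P.permMatrix F

/-- The semimonomial transformation `(M, α)` acting by `v ↦ (v M)^α`. -/
def semiMap {n : Type*} [Fintype n] (M : Matrix n n F) (α : F ≃+* F) (v : n → F) : n → F :=
  fun j => α (Matrix.vecMul v M j)

/-- The row space of a matrix. -/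
def rowSpan {k n : Type*} (G : Matrix k n F) : Submodule F (n → F) :=
  Submodule.span F (Set.range fun i => G i)

/-- The matrix `(G | aᵀ)` obtained from `G` by appending the column `aᵀ`. -/
def appendCol {k n : Type*} (G : Matrix k n F) (a : k → F) : Matrix k (n ⊕ Unit) F :=
  Matrix.of fun i => Sum.elim (G i) (fun _ => a i)

/-- Auxiliary: the image of a row span under a semilinear map is the row span of the
image matrix. -/
theorem map_rowSpan_aux {k m n : Type*} {σ : F →+* F} (hσ : Function.Surjective σ)
    (f : (m → F) →ₛₗ[σ] (n → F)) (A : Matrix k m F) :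
    f '' (rowSpan A : Set (m → F)) =
      (rowSpan (Matrix.of fun i => f (A i)) : Set (n → F)) := by
  haveI : RingHomSurjective σ := ⟨hσ⟩
  have h1 : (Set.range fun i => (Matrix.of fun i => f (A i)) i) =
      f '' Set.range (fun i => A i) := by
    rw [← Set.range_comp]; rfl
  rw [rowSpan, rowSpan, h1, ← Submodule.map_span, Submodule.map_coe]

/-- Auxiliary: `semiMap M β` as a semilinear map. -/
def semiLin {n : Type*} [Fintype n] (M : Matrix n n F) (β : F ≃+* F) :
    (n → F) →ₛₗ[(β : F →+* F)] (n → F) where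
  toFun := semiMap M β
  map_add' u v := by
    funext j; simp [semiMap, Matrix.add_vecMul]
  map_smul' c v := by
    funext j; simp [semiMap, Matrix.smul_vecMul, smul_eq_mul]

/-- Let `C` have generator matrix `G` of rank `k` and let `ψ = ([[M1,0],[0,μ]], β)` be a
semimonomial transformation mapping the code generated by `(G | aᵀ)` onto the code
generated by `(G | bᵀ)`.  Then `(μ⁻¹ M1, β) ∈ Aut(C)` and, for the matrix
`A' ∈ GL(k, F_q)` with `(G μ⁻¹ M1)^β = A' G`, one has `aᵀ = (A' bᵀ)^{β⁻¹}`; i.e. `aᵀ`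
and `bᵀ` lie in the same orbit under the action `(A, γ)(x) = (A xᵀ)^{γ⁻¹}` of `Im(f)`. -/
theorem stmt4 [Fintype F] {n k : ℕ}
    (C : Submodule F (Fin n → F)) (G : Matrix (Fin k) (Fin n) F)
    (hG : rowSpan G = C) (hrank : G.rank = k)
    (a b : Fin k → F)
    (M1 : Matrix (Fin n) (Fin n) F) (μ : Fˣ) (β : F ≃+* F)
    (hM1 : IsMonomial M1)
    (hmap : semiMap (Matrix.fromBlocks M1 0 0 (Matrix.of fun _ _ => (μ : F))) β ''
        (rowSpan (appendCol G a) : Set ((Fin n ⊕ Unit) → F)) =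
        (rowSpan (appendCol G b) : Set ((Fin n ⊕ Unit) → F))) :
    (IsMonomial (((μ : F)⁻¹) • M1) ∧
      semiMap (((μ : F)⁻¹) • M1) β '' (C : Set (Fin n → F)) = (C : Set (Fin n → F))) ∧
    ∃ A' : Matrix (Fin k) (Fin k) F, IsUnit A' ∧
      (G * (((μ : F)⁻¹) • M1)).map ⇑β = A' * G ∧
      a = fun i => β.symm ((A' *ᵥ b) i) := by
  classical
  obtain ⟨d, P, hM1eq⟩ := hM1
  set c : F := (μ : F)⁻¹ with hc
  have hcne : c ≠ 0 := inv_ne_zero μ.ne_zero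
  set Mblk := Matrix.fromBlocks M1 0 0 (Matrix.of fun _ _ => (μ : F)) with hMblk
  -- monomiality of c • M1
  have hmono : IsMonomial (c • M1) := by
    refine ⟨fun i => μ⁻¹ * d i, P, ?_⟩
    rw [hM1eq]
    ext i j
    simp only [Matrix.smul_apply, Matrix.mul_apply, Matrix.diagonal, Matrix.of_apply,
      smul_eq_mul, Finset.mul_sum, Units.val_mul, Units.val_inv_eq_inv_val, hc]
    exact Finset.sum_congr rfl fun x _ => by split_ifs <;> ring
  -- linear independence of the rows of G
  have hlin : LinearIndependent F (fun i => G i) := by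
    rw [linearIndependent_iff_card_eq_finrank_span, Set.finrank]
    change Fintype.card (Fin k) = Module.finrank F (Submodule.span F (Set.range G.row))
    rw [← Matrix.rank_eq_finrank_span_row, hrank, Fintype.card_fin]
  have hGinj : Function.Injective G.vecMul := Matrix.vecMul_injective_iff.mpr hlin
  have hG0 : ∀ x : Fin k → F, x ᵥ* G = 0 → x = 0 := by
    intro x hx
    exact hGinj (show x ᵥ* G = (0 : Fin k → F) ᵥ* G by rw [hx, Matrix.zero_vecMul])
  -- invertibility of c • M1
  have hNunit : IsUnit (c • M1) := by
    rw [Matrix.isUnit_iff_isUnit_det, hM1eq, Matrix.det_smul, Matrix.det_mul,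
      Matrix.det_diagonal, Matrix.det_permutation, isUnit_iff_ne_zero]
    refine mul_ne_zero (pow_ne_zero _ hcne) (mul_ne_zero ?_ ?_)
    · exact Finset.prod_ne_zero_iff.2 fun i _ => (d i).ne_zero
    · rcases Int.units_eq_one_or (Equiv.Perm.sign P) with h | h <;> simp [h]
  -- projection onto the first n coordinates
  have hπ : ∀ v : (Fin n ⊕ Unit) → F, semiMap Mblk β v ∘ Sum.inl = semiMap M1 β (v ∘ Sum.inl) := by
    intro v
    funext j
    simp [semiMap, hMblk, Matrix.vecMul_fromBlocks]
  have hrowproj : ∀ x : Fin k → F,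
      (fun v : (Fin n ⊕ Unit) → F => v ∘ Sum.inl) '' (rowSpan (appendCol G x) : Set _) =
        (C : Set (Fin n → F)) := by
    intro x
    have := map_rowSpan_aux (σ := RingHom.id F) Function.surjective_id
      (LinearMap.funLeft F F Sum.inl) (appendCol G x)
    have heq : (Matrix.of fun i => LinearMap.funLeft F F Sum.inl (appendCol G x i)) = G := by
      ext i j; rfl
    rw [heq, hG] at this
    exact this
  -- image of C under semiMap M1 β
  have h1 : semiMap M1 β '' (C : Set (Fin n → F)) = (C : Set (Fin n → F)) := by
    calc semiMap M1 β '' (C : Set (Fin n → F))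
        = semiMap M1 β ''
            ((fun v : (Fin n ⊕ Unit) → F => v ∘ Sum.inl) ''
              (rowSpan (appendCol G a) : Set _)) := by rw [hrowproj a]
      _ = (fun v : (Fin n ⊕ Unit) → F => v ∘ Sum.inl) ''
            (semiMap Mblk β '' (rowSpan (appendCol G a) : Set _)) := by
          have hcomp : (semiMap M1 β ∘ fun v : (Fin n ⊕ Unit) → F => v ∘ Sum.inl) =
              ((fun v : (Fin n ⊕ Unit) → F => v ∘ Sum.inl) ∘ semiMap Mblk β) := by
            funext v
            exact (hπ v).symm
          rw [← Set.image_comp, hcomp, Set.image_comp]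
      _ = (fun v : (Fin n ⊕ Unit) → F => v ∘ Sum.inl) ''
            (rowSpan (appendCol G b) : Set _) := by rw [hmap]
      _ = (C : Set (Fin n → F)) := hrowproj b
  -- image of C under semiMap (c • M1) β
  have hsc : semiMap (c • M1) β = (fun v => β c • v) ∘ semiMap M1 β := by
    funext v j
    simp [semiMap, Matrix.vecMul, dotProduct, Finset.mul_sum, map_sum, mul_left_comm,
      mul_assoc, smul_eq_mul]
  have hβcne : β c ≠ 0 := fun h => hcne (by simpa using β.injective (by simpa using h))
  have h2 : semiMap (c • M1) β '' (C : Set (Fin n → F)) = (C : Set (Fin n → F)) := by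
    rw [hsc, Set.image_comp, h1]
    ext y
    constructor
    · rintro ⟨x, hx, rfl⟩
      exact C.smul_mem _ hx
    · intro hy
      exact ⟨(β c)⁻¹ • y, C.smul_mem _ hy, by
        simp [smul_smul, mul_inv_cancel₀ hβcne]⟩
  refine ⟨⟨hmono, h2⟩, ?_⟩
  -- coefficients for the rows
  have hrow : ∀ i, ∃ cf : Fin k → F,
      (∑ j, cf j • appendCol G b j) = semiMap Mblk β (appendCol G a i) := by
    intro i
    have hmem : appendCol G a i ∈ rowSpan (appendCol G a) :=
      Submodule.subset_span ⟨i, rfl⟩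
    have hmem2 : semiMap Mblk β (appendCol G a i) ∈ (rowSpan (appendCol G b) : Set _) := by
      rw [← hmap]
      exact ⟨_, hmem, rfl⟩
    exact (Submodule.mem_span_range_iff_exists_fun F).1 hmem2
  choose cf hcf using hrow
  set A' : Matrix (Fin k) (Fin k) F := Matrix.of fun i j => β c * cf i j with hA'
  -- the component equations
  have e1 : ∀ i j, ∑ l, cf i l * G l j = β ((G * M1) i j) := by
    intro i j
    have := congrFun (hcf i) (Sum.inl j)
    simpa [appendCol, semiMap, hMblk, Matrix.vecMul_fromBlocks, Matrix.mul_apply,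
      Matrix.vecMul, dotProduct, Finset.sum_apply] using this
  have e2 : ∀ i, ∑ l, cf i l * b l = β (a i * μ) := by
    intro i
    have := congrFun (hcf i) (Sum.inr ())
    simpa [appendCol, semiMap, hMblk, Matrix.vecMul_fromBlocks,
      Matrix.vecMul, dotProduct, Finset.sum_apply] using this
  have hA'G : (G * (c • M1)).map ⇑β = A' * G := by
    ext i j
    have : (G * (c • M1)) i j = c * (G * M1) i j := by
      rw [Matrix.mul_smul]
      rfl
    rw [Matrix.map_apply, this, _root_.map_mul β, ← e1 i j, hA']
    simp [Matrix.mul_apply, Finset.mul_sum, mul_assoc]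
  have hab : a = fun i => β.symm ((A' *ᵥ b) i) := by
    funext i
    have : (A' *ᵥ b) i = β (a i) := by
      have h3 : (A' *ᵥ b) i = β c * ∑ l, cf i l * b l := by
        simp [hA', Matrix.mulVec, dotProduct, Finset.mul_sum, mul_assoc]
      rw [h3, e2 i, ← _root_.map_mul β]
      congr 1
      rw [hc, mul_comm (a i) (μ : F), ← mul_assoc, inv_mul_cancel₀ μ.ne_zero, one_mul]
    rw [this, RingEquiv.symm_apply_apply]
  -- invertibility of A'
  have hker : ∀ z : Fin k → F, z ᵥ* A' = 0 → z = 0 := by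
    intro z hz
    have h3 : z ᵥ* ((G * (c • M1)).map ⇑β) = 0 := by
      rw [hA'G, ← Matrix.vecMul_vecMul, hz, Matrix.zero_vecMul]
    have h4 : (fun i => β.symm (z i)) ᵥ* (G * (c • M1)) = 0 := by
      funext j
      have h5 := congrFun h3 j
      apply β.injective
      simp only [Matrix.vecMul, dotProduct, Matrix.map_apply, Pi.zero_apply] at h5 ⊢
      rw [map_sum, map_zero]
      simpa [_root_.map_mul] using h5
    have h6 : ((fun i => β.symm (z i)) ᵥ* G) ᵥ* (c • M1) = 0 := by
      rw [Matrix.vecMul_vecMul]; exact h4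
    have h7 : (fun i => β.symm (z i)) ᵥ* G = 0 :=
      Matrix.vecMul_injective_iff_isUnit.2 hNunit
        (show ((fun i => β.symm (z i)) ᵥ* G) ᵥ* (c • M1) = (0 : Fin n → F) ᵥ* (c • M1) by
          rw [h6, Matrix.zero_vecMul])
    have h8 := hG0 _ h7
    funext i
    have h9 := congrFun h8 i
    simp only [Pi.zero_apply] at h9
    have := β.symm.injective (a₂ := 0) (by simpa using h9)
    simpa using this
  have hA'unit : IsUnit A' := by
    rw [← Matrix.vecMul_injective_iff_isUnit]
    intro x y hxy
    have hxy' : x ᵥ* A' = y ᵥ* A' := hxy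
    have := hker (x - y) (by rw [Matrix.sub_vecMul, hxy', sub_self])
    exact sub_eq_zero.1 this
  exact ⟨A', hA'unit, hA'G, hab⟩
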